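/- Let F be a field of characteristic 0 and let A be a finite-dimensional F-algebra that is a semisimple ring. Let x ∈ A be an element whose minimal polynomial over F is squarefree. Then the centralizer of x in A (the F-subalgebra {y ∈ A | x*y = y*x}) is itself a semisimple ring. -/

import Mathlib

open Polynomial LinearMap

section aux

variable {F A : Type*} [Field F] [Ring A] [Algebra F A]

lemma aeval_mulLeft_eq (x : A) (p : F[X]) :
    aeval (LinearMap.mulLeft F x) p = LinearMap.mulLeft F (aeval x p) := by
  induction p using Polynomial.induction_on' with
  | add p q hp hq =>
    ext a
    simp [hp, hq, add_mul]
  | monomial n c =>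
    rw [aeval_monomial, aeval_monomial, LinearMap.pow_mulLeft]
    ext a
    simp [Module.End.mul_apply, Module.algebraMap_end_apply, Algebra.smul_def, mul_assoc]

lemma aeval_mulRight_eq (x : A) (p : F[X]) :
    aeval (LinearMap.mulRight F x) p = LinearMap.mulRight F (aeval x p) := by
  induction p using Polynomial.induction_on' with
  | add p q hp hq =>
    ext a
    simp [hp, hq, mul_add]
  | monomial n c =>
    rw [aeval_monomial, aeval_monomial, LinearMap.pow_mulRight]
    ext a
    rw [Module.End.mul_apply, Module.algebraMap_end_apply, LinearMap.mulRight_apply,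
      LinearMap.mulRight_apply, Algebra.smul_def, ← mul_assoc, ← mul_assoc, Algebra.commutes]

end aux

/-- The centralizer of a semisimple element (squarefree minimal polynomial)
in a finite-dimensional semisimple algebra over a field of characteristic
zero is again a semisimple ring. -/
theorem stmt_5 (F : Type*) [Field F] [CharZero F]
    (A : Type*) [Ring A] [Algebra F A] [FiniteDimensional F A]
    [IsSemisimpleRing A] (x : A)
    (hx : Squarefree (minpoly F x)) :
    IsSemisimpleRing (Subalgebra.centralizer F ({x} : Set A)) := by
  set C := Subalgebra.centralizer F ({x} : Set A) with hC
  -- the adjoint endomorphism  a ↦ x*a - a*x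
  set g : Module.End F A := LinearMap.mulLeft F x - LinearMap.mulRight F x with hg_def
  have hg_apply : ∀ a : A, g a = x * a - a * x := fun a => rfl
  -- g is a semisimple endomorphism
  have hL : Module.End.IsSemisimple (LinearMap.mulLeft F x : Module.End F A) := by
    refine Module.End.isSemisimple_of_squarefree_aeval_eq_zero hx ?_
    rw [aeval_mulLeft_eq, minpoly.aeval]
    exact LinearMap.mulLeft_zero_eq_zero F A
  have hR : Module.End.IsSemisimple (LinearMap.mulRight F x : Module.End F A) := by
    refine Module.End.isSemisimple_of_squarefree_aeval_eq_zero hx ?_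
    rw [aeval_mulRight_eq, minpoly.aeval]
    exact LinearMap.mulRight_zero_eq_zero F A
  have hcomm : Commute (LinearMap.mulLeft F x) (LinearMap.mulRight F x) := by
    ext a
    simp [Module.End.mul_apply, mul_assoc]
  have hgss : g.IsSemisimple := Module.End.IsSemisimple.sub_of_commute hcomm hL hR
  -- the kernel of g is the centralizer
  have hkerC : ∀ a : A, a ∈ LinearMap.ker g ↔ a ∈ C := by
    intro a
    rw [LinearMap.mem_ker, hg_apply, sub_eq_zero, hC]
    simp [Subalgebra.mem_centralizer_iff]
  -- A = ker g ⊕ range g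
  have hker_invt : LinearMap.ker g ∈ g.invtSubmodule := by
    rw [Module.End.mem_invtSubmodule]
    intro a ha
    rw [LinearMap.mem_ker] at ha
    simp [Submodule.mem_comap, ha]
  obtain ⟨q, hq_invt, hq⟩ := (Module.End.isSemisimple_iff.mp hgss) _ hker_invt
  have hrange_le : LinearMap.range g ≤ q := by
    rintro _ ⟨w, rfl⟩
    have hw : w ∈ LinearMap.ker g ⊔ q := by rw [hq.sup_eq_top]; trivial
    obtain ⟨k, hk, v, hv, rfl⟩ := Submodule.mem_sup.mp hw
    rw [map_add, LinearMap.mem_ker.mp hk, zero_add]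
    exact Submodule.mem_comap.mp ((Module.End.mem_invtSubmodule g).mp hq_invt hv)
  have hrange_eq : LinearMap.range g = q := by
    refine Submodule.eq_of_le_of_finrank_eq hrange_le ?_
    have h1 := LinearMap.finrank_range_add_finrank_ker g
    have h2 := Submodule.finrank_add_eq_of_isCompl hq
    omega
  have hcompl : IsCompl (LinearMap.ker g) (LinearMap.range g) := hrange_eq ▸ hq
  -- the bimodule projection E : A → C
  set E : A →ₗ[F] A :=
    (LinearMap.ker g).subtype ∘ₗ Submodule.projectionOnto _ _ hcompl with hE_def
  have hEC : ∀ a : A, E a ∈ C := fun a =>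
    (hkerC _).mp (SetLike.coe_mem (Submodule.projectionOnto _ _ hcompl a))
  have hEk : ∀ a ∈ LinearMap.ker g, E a = a := by
    intro a ha
    have h := Submodule.projectionOnto_apply_left hcompl ⟨a, ha⟩
    simp only [hE_def, LinearMap.comp_apply, Submodule.subtype_apply]
    rw [h]
  have hEr0 : ∀ a ∈ LinearMap.range g, E a = 0 := by
    intro a ha
    have h := Submodule.projectionOnto_apply_of_mem_right hcompl ha
    simp only [hE_def, LinearMap.comp_apply, Submodule.subtype_apply]
    rw [h]; rfl
  -- commutation of g with left/right multiplication by elements of C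
  have hcx : ∀ c : C, x * (c : A) = (c : A) * x := fun c =>
    Subalgebra.mem_centralizer_iff F |>.mp c.2 x rfl
  have hgl : ∀ (c : C) (a : A), g ((c : A) * a) = (c : A) * g a := by
    intro c a
    rw [hg_apply, hg_apply, mul_sub, ← mul_assoc, hcx, mul_assoc, mul_assoc]
  have hgr : ∀ (c : C) (a : A), g (a * (c : A)) = g a * (c : A) := by
    intro c a
    rw [hg_apply, hg_apply, sub_mul, mul_assoc a, mul_assoc a, ← hcx, ← mul_assoc, ← mul_assoc]
  -- E is a C-bimodule map
  have hdecomp : ∀ a : A, ∃ k ∈ LinearMap.ker g, ∃ r ∈ LinearMap.range g, a = k + r := by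
    intro a
    have hw : a ∈ LinearMap.ker g ⊔ LinearMap.range g := by rw [hcompl.sup_eq_top]; trivial
    obtain ⟨k, hk, r, hr, h⟩ := Submodule.mem_sup.mp hw
    exact ⟨k, hk, r, hr, h.symm⟩
  have hEl : ∀ (c : C) (a : A), E ((c : A) * a) = (c : A) * E a := by
    intro c a
    obtain ⟨k, hk, r, hr, rfl⟩ := hdecomp a
    have h1 : (c : A) * k ∈ LinearMap.ker g := by
      rw [LinearMap.mem_ker, hgl, LinearMap.mem_ker.mp hk, mul_zero]
    have h2 : (c : A) * r ∈ LinearMap.range g := by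
      obtain ⟨w, rfl⟩ := hr
      exact ⟨(c : A) * w, hgl c w⟩
    rw [mul_add, map_add, hEk _ h1, hEr0 _ h2, map_add, hEk _ hk, hEr0 _ hr,
      add_zero, add_zero]
  have hEr : ∀ (c : C) (a : A), E (a * (c : A)) = E a * (c : A) := by
    intro c a
    obtain ⟨k, hk, r, hr, rfl⟩ := hdecomp a
    have h1 : k * (c : A) ∈ LinearMap.ker g := by
      rw [LinearMap.mem_ker, hgr, LinearMap.mem_ker.mp hk, zero_mul]
    have h2 : r * (c : A) ∈ LinearMap.range g := by
      obtain ⟨w, rfl⟩ := hr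
      exact ⟨w * (c : A), hgr c w⟩
    rw [add_mul, map_add, hEk _ h1, hEr0 _ h2, map_add, hEk _ hk, hEr0 _ hr,
      add_zero, add_zero]
  have hEid : ∀ c : C, E (c : A) = (c : A) := fun c => hEk _ ((hkerC _).mpr c.2)
  -- now prove the complemented-lattice property for left ideals of C
  refine (isSemisimpleModule_iff _ _).mpr ⟨?_⟩
  intro I
  -- the left ideal of A generated by I
  set J : Ideal A := Ideal.span (Subtype.val '' (I : Set C)) with hJ_def
  obtain ⟨e, he, hspan⟩ := IsSemisimpleRing.ideal_eq_span_idempotent J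
  have heJ : e ∈ J := by rw [hspan]; exact Ideal.subset_span rfl
  have habs : ∀ a ∈ J, a * e = a := by
    intro a ha
    rw [hspan] at ha
    obtain ⟨r, rfl⟩ := Submodule.mem_span_singleton.mp ha
    show r • e * e = r • e
    rw [smul_mul_assoc, he.eq]
  -- key: E maps J into I
  have key : ∀ a ∈ J, (⟨E a, hEC a⟩ : C) ∈ I := by
    intro a ha
    rw [hJ_def, Ideal.span] at ha
    obtain ⟨n, f, s, hsum⟩ := Submodule.mem_span_set'.mp ha
    have : ∃ z ∈ I, E a = (z : A) := by
      refine ⟨∑ i, ⟨E (f i), hEC _⟩ * (Classical.choose (s i).2 : C), ?_, ?_⟩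
      · refine Submodule.sum_mem I fun i _ => ?_
        have hz := Classical.choose_spec (s i).2
        exact Submodule.smul_mem I _ hz.1
      · rw [← hsum, map_sum]
        push_cast
        refine Finset.sum_congr rfl fun i _ => ?_
        have hz := Classical.choose_spec (s i).2
        have hval : ((Classical.choose (s i).2 : C) : A) = ((s i : A)) := hz.2
        rw [smul_eq_mul]
        conv_lhs => rw [← hval]
        rw [hEr]
    obtain ⟨z, hzI, hz⟩ := this
    have : (⟨E a, hEC a⟩ : C) = z := Subtype.ext hz
    rw [this]; exact hzI
  have hmemJ : ∀ y : C, (y : A) * e ∈ J := fun y => J.smul_mem (y : A) heJ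
  -- the C-linear projection of C onto I
  let ρ₀ : C →ₗ[C] C :=
    { toFun := fun y => ⟨E ((y : A) * e), hEC _⟩
      map_add' := by
        intro y z
        apply Subtype.ext
        show E (((y + z : C) : A) * e) = ((⟨E ((y : A) * e), hEC _⟩ + ⟨E ((z : A) * e), hEC _⟩ : C) : A)
        push_cast
        rw [add_mul, map_add]
      map_smul' := by
        intro c y
        apply Subtype.ext
        show E (((c • y : C) : A) * e) = ((c • (⟨E ((y : A) * e), hEC _⟩ : C) : C) : A)
        rw [smul_eq_mul, smul_eq_mul]
        push_cast
        rw [mul_assoc, hEl] }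
  let ρ : C →ₗ[C] I := ρ₀.codRestrict I (fun y => key _ (hmemJ y))
  have hproj : ∀ z : I, ρ (z : C) = z := by
    intro z
    have hzJ : ((z : C) : A) ∈ J := by
      rw [hJ_def]
      exact Ideal.subset_span ⟨(z : C), z.2, rfl⟩
    have : ((z : C) : A) * e = ((z : C) : A) := habs _ hzJ
    ext
    show E (((z : C) : A) * e) = ((z : C) : A)
    rw [this, hEid]
  exact ⟨LinearMap.ker ρ, LinearMap.isCompl_of_proj hproj⟩
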